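/- Under the CA-OCRDC recursion with the doubly-adaptive adjustment policy, predictors satisfying Assumption 1, and a deterministic erasure sequence {E_t} satisfying the envelope condition with constant A < (D − ε)/D_max and sublinear ψ, for every horizon T ≥ 1, every sequence of source symbols, every D ∈ (0, D_max] and ε ∈ (0, D), the reconstructed sequence satisfies (1/T) ∑_{t=1}^T d(X_t, X̂_t) ≤ D + K/(T η) + (τ_max·(D_max − D + ε) + D − ε)/T, where K = L/ε + η(D_max − ε) − λ_0 and τ_max = min{τ ∈ ℕ : ψ(τ)/τ ≤ (D − ε)/D_max − A} is finite. (Theorem 3, CA-OCRDC case) -/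
import Mathlib


set_option maxHeartbeats 2000000 in
/-- **Theorem 3, CA-OCRDC case (deterministic erasure channel).**
Under the CA-OCRDC recursion with the doubly-adaptive adjustment policy, predictors
satisfying Assumption 1, and a deterministic erasure sequence `{E_t} ⊆ {0,1}`
satisfying the envelope condition `∑_{t=k}^{k+τ} E_t < A τ + ψ(τ)` with
`A < (D − ε)/D_max` and sublinear `ψ`, for every horizon `T ≥ 1`, every source
sequence, every `D ∈ (0, D_max]` and `ε ∈ (0, D)`:
`(1/T) ∑_{t=1}^T d(X_t, X̂_t) ≤ D + K/(T η) + (τ_max (D_max − D + ε) + D − ε)/T`,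
where `K = L/ε + η(D_max − ε) − λ₀` and
`τ_max = min{τ ≥ 1 : ψ(τ)/τ ≤ (D − ε)/D_max − A}` is finite. -/
theorem ca_ocrdc_deterministic_erasure_guarantee
    {𝒳 : Type*} [Fintype 𝒳] [Nonempty 𝒳]
    (Dmax : ℝ) (hDmax : 0 < Dmax)
    (d : 𝒳 → 𝒳 → ℝ) (hd : ∀ x y, 0 ≤ d x y ∧ d x y ≤ Dmax) (hdd : ∀ x, d x x = 0)
    (X Xtil Xhat : ℕ → 𝒳) (p : ℕ → 𝒳 → ℝ)
    (hp : ∀ t x, 0 < p t x ∧ p t x ≤ 1) (hp1 : ∀ t, ∑ x, p t x = 1)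
    (L : ℝ) (hL : ∀ t x, -Real.log (p t x) < L)
    (D ε : ℝ) (hD : 0 < D ∧ D ≤ Dmax) (hε : 0 < ε ∧ ε < D)
    (E : ℕ → ℝ) (hE : ∀ t, E t = 0 ∨ E t = 1)
    (A : ℝ) (hA : A < (D - ε) / Dmax)
    (ψ : ℕ → ℝ) (hψ0 : ∀ τ, 0 ≤ ψ τ)
    (hψsub : Filter.Tendsto (fun τ : ℕ => ψ τ / τ) Filter.atTop (nhds 0))
    (henv : ∀ k, 1 ≤ k → ∀ τ, 1 ≤ τ →
      ∑ t ∈ Finset.Icc k (k + τ), E t < A * τ + ψ τ)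
    (η : ℝ) (hη : 0 < η)
    (lam₀ : ℝ) (hlam₀ : 0 < lam₀ ∧ lam₀ ≤ L / ε + η * (Dmax - ε))
    (lam s δtgt Q : ℕ → ℝ) (hinit : lam 1 = lam₀)
    (hs : ∀ t, s t = max 0 (lam t))
    (hmin : ∀ t, 1 ≤ t → ∀ x,
      -Real.log (p t (Xtil t)) + s t * d (X t) (Xtil t)
        ≤ -Real.log (p t x) + s t * d (X t) x)
    (hupd : ∀ t, 1 ≤ t →
      lam (t + 1) = lam t + η * (d (X t) (Xtil t) - D + δtgt t))
    (hrec0 : ∀ t, 1 ≤ t → E t = 0 → Xhat t = Xtil t)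
    (hrec1 : ∀ t, 1 ≤ t → E t = 1 → d (X t) (Xtil t) ≤ d (X t) (Xhat t))
    (hQ0 : Q 0 = 0)
    (hQ : ∀ t, Q t = ∑ i ∈ Finset.Icc 1 t,
      ((d (X i) (Xhat i) - d (X i) (Xtil i)) - δtgt i))
    (hδ1 : δtgt 1 = 0)
    (hδ : ∀ t, 1 ≤ t → δtgt (t + 1) = min (D - ε) (Q t))
    (T : ℕ) (hT : 1 ≤ T) :
    {τ : ℕ | 1 ≤ τ ∧ ψ τ / τ ≤ (D - ε) / Dmax - A}.Nonempty ∧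
    (1 / (T : ℝ)) * ∑ t ∈ Finset.Icc 1 T, d (X t) (Xhat t)
      ≤ D + (L / ε + η * (Dmax - ε) - lam₀) / ((T : ℝ) * η)
        + ((sInf {τ : ℕ | 1 ≤ τ ∧ ψ τ / τ ≤ (D - ε) / Dmax - A} : ℕ)
            * (Dmax - D + ε) + D - ε) / T := by
  classical
  obtain ⟨hD0, hDle⟩ := hD
  obtain ⟨hε0, hεD⟩ := hε
  obtain ⟨hlam0pos, hlam0le⟩ := hlam₀
  have hc : 0 < (D - ε) / Dmax - A := by linarith
  -- Part 1: nonemptiness of the set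
  have hS : {τ : ℕ | 1 ≤ τ ∧ ψ τ / τ ≤ (D - ε) / Dmax - A}.Nonempty := by
    have h1 : ∀ᶠ τ : ℕ in Filter.atTop, ψ τ / τ < (D - ε) / Dmax - A :=
      hψsub.eventually_lt_const hc
    have h2 : ∀ᶠ τ : ℕ in Filter.atTop, 1 ≤ τ := Filter.eventually_ge_atTop 1
    obtain ⟨τ, hτ1, hτ2⟩ := (h2.and h1).exists
    exact ⟨τ, hτ1, hτ2.le⟩
  have hTpos : (0:ℝ) < T := by exact_mod_cast hT
  refine ⟨hS, ?_⟩
  set τm : ℕ := sInf {τ : ℕ | 1 ≤ τ ∧ ψ τ / τ ≤ (D - ε) / Dmax - A} with hτmdef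
  have hτmem : 1 ≤ τm ∧ ψ τm / τm ≤ (D - ε) / Dmax - A := Nat.sInf_mem hS
  clear_value τm
  obtain ⟨hτm1, hτmψ⟩ := hτmem
  have hτmpos : (0:ℝ) < τm := by exact_mod_cast hτm1
  have hψτ : Dmax * (A * τm + ψ τm) ≤ (D - ε) * τm := by
    rw [div_le_iff₀ hτmpos] at hτmψ
    have h1 : A * τm + ψ τm ≤ (D - ε) / Dmax * τm := by linarith
    calc Dmax * (A * τm + ψ τm) ≤ Dmax * ((D - ε) / Dmax * τm) :=
          mul_le_mul_of_nonneg_left h1 hDmax.le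
      _ = (D - ε) * τm := by field_simp
  -- L is positive
  have hL0 : 0 < L := by
    have x0 : 𝒳 := Classical.arbitrary 𝒳
    have h1 := hL 1 x0
    have h2 : Real.log (p 1 x0) ≤ 0 := Real.log_nonpos (hp 1 x0).1.le (hp 1 x0).2
    linarith
  -- channel distortion increments
  set δch : ℕ → ℝ := fun t => d (X t) (Xhat t) - d (X t) (Xtil t) with hδch
  have hch_nonneg : ∀ t, 1 ≤ t → 0 ≤ δch t := by
    intro t ht
    rcases hE t with h | h
    · simp [hδch, hrec0 t ht h]
    · have := hrec1 t ht h
      simp only [hδch]; linarith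
  have hch_le : ∀ t, 1 ≤ t → δch t ≤ Dmax * E t := by
    intro t ht
    rcases hE t with h | h
    · simp [hδch, hrec0 t ht h, h]
    · have h1 := (hd (X t) (Xhat t)).2
      have h2 := (hd (X t) (Xtil t)).1
      simp only [hδch, h, mul_one]; linarith
  have hch_leD : ∀ t, δch t ≤ Dmax := by
    intro t
    have h1 := (hd (X t) (Xhat t)).2
    have h2 := (hd (X t) (Xtil t)).1
    simp only [hδch]; linarith
  -- Q difference over an interval
  have hQdiff : ∀ a b : ℕ, a ≤ b →
      Q b = Q a + ∑ i ∈ Finset.Ioc a b, (δch i - δtgt i) := by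
    intro a b hab
    simp only [hδch]
    rw [hQ a, hQ b, show Finset.Icc 1 a = Finset.Ioc 0 a from Finset.Icc_add_one_left_eq_Ioc 0 a,
      show Finset.Icc 1 b = Finset.Ioc 0 b from Finset.Icc_add_one_left_eq_Ioc 0 b,
      ← Finset.sum_Ioc_consecutive
        (fun i => d (X i) (Xhat i) - d (X i) (Xtil i) - δtgt i) (Nat.zero_le a) hab]
  have hQstep : ∀ t : ℕ, Q (t+1) = Q t + (δch (t+1) - δtgt (t+1)) := by
    intro t
    have := hQdiff t (t+1) (Nat.le_succ t)
    rwa [show Finset.Ioc t (t+1) = {t+1} by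
      rw [← Finset.Icc_add_one_left_eq_Ioc]; exact Finset.Icc_self (t+1), Finset.sum_singleton] at this
  clear_value δch
  -- Q is nonnegative
  have hQnonneg : ∀ t, 0 ≤ Q t := by
    intro t
    induction t with
    | zero => rw [hQ0]
    | succ n ih =>
      rw [hQstep n]
      rcases Nat.eq_zero_or_pos n with h0 | hn
      · subst h0
        rw [hQ0, hδ1]
        have := hch_nonneg 1 le_rfl
        linarith
      · rw [hδ n hn]
        have h1 : min (D - ε) (Q n) ≤ Q n := min_le_right _ _
        have := hch_nonneg (n+1) (by omega)
        linarith
  -- target adjustments are in [0, D-ε]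
  have hδtgt_bounds : ∀ t, 1 ≤ t → 0 ≤ δtgt t ∧ δtgt t ≤ D - ε := by
    intro t ht
    rcases Nat.exists_eq_add_of_le ht with ⟨n, rfl⟩
    rcases Nat.eq_zero_or_pos n with h0 | hn
    · subst h0; rw [hδ1]; constructor <;> linarith
    · rw [show 1 + n = n + 1 by omega, hδ n hn]
      exact ⟨le_min (by linarith) (hQnonneg n), min_le_left _ _⟩
  -- upper bound on the multiplier
  have hlam_ub : ∀ t, 1 ≤ t → lam t ≤ L / ε + η * (Dmax - ε) := by
    intro t ht
    induction t with
    | zero => omega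
    | succ n ih =>
      rcases Nat.eq_zero_or_pos n with h0 | hn
      · subst h0; rw [hinit]; exact hlam0le
      · have ihn := ih hn
        have hup := hupd n hn
        obtain ⟨htg0, htg1⟩ := hδtgt_bounds n hn
        have hd1 := (hd (X n) (Xtil n)).1
        have hd2 := (hd (X n) (Xtil n)).2
        by_cases hcase : lam n ≤ L / ε
        · rw [hup]
          have : d (X n) (Xtil n) - D + δtgt n ≤ Dmax - ε := by linarith
          nlinarith
        · push_neg at hcase
          have hLε : 0 < L / ε := div_pos hL0 hε0
          have hsn : s n = lam n := by rw [hs]; exact max_eq_right (by linarith)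
          have hsnpos : 0 < s n := by rw [hsn]; linarith
          have hmin' := hmin n hn (X n)
          rw [hdd (X n), mul_zero] at hmin'
          have hlogpos : 0 ≤ -Real.log (p n (Xtil n)) := by
            have := Real.log_nonpos (hp n (Xtil n)).1.le (hp n (Xtil n)).2
            linarith
          have hLn := hL n (X n)
          have h1 : s n * d (X n) (Xtil n) < L := by linarith
          have hd_lt : d (X n) (Xtil n) < ε := by
            by_contra h
            push_neg at h
            have h2 : L < s n * ε := by
              rw [div_lt_iff₀ hε0] at hcase
              rw [hsn]; linarith
            have h3 : s n * ε ≤ s n * d (X n) (Xtil n) :=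
              mul_le_mul_of_nonneg_left h hsnpos.le
            linarith
          rw [hup]
          have : d (X n) (Xtil n) - D + δtgt n ≤ 0 := by linarith
          nlinarith
  -- telescoping of the multiplier update
  have htel : ∀ n : ℕ,
      η * (∑ t ∈ Finset.Icc 1 n, (d (X t) (Xtil t) - D + δtgt t)) = lam (n+1) - lam 1 := by
    intro n
    induction n with
    | zero => simp
    | succ m ih =>
      rw [Finset.sum_Icc_succ_top (by omega), mul_add, ih, hupd (m+1) (by omega)]
      ring
  -- δtgt equals D - ε during excursions above D - ε
  obtain ⟨t0, ht0T, hPt0, hgt⟩ :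
      ∃ t0, t0 ≤ T ∧ Q t0 ≤ D - ε ∧ ∀ m, t0 < m → m ≤ T → D - ε < Q m := by
    refine ⟨Nat.findGreatest (fun t => Q t ≤ D - ε) T, Nat.findGreatest_le T, ?_, ?_⟩
    · exact Nat.findGreatest_spec (P := fun t => Q t ≤ D - ε) (Nat.zero_le T)
        (by show Q 0 ≤ D - ε; rw [hQ0]; linarith)
    · intro m h1 h2
      have h3 : ¬ (Q m ≤ D - ε) :=
        Nat.findGreatest_is_greatest (P := fun t => Q t ≤ D - ε) h1 h2
      linarith [not_le.mp h3]
  have hδtgt_eq : ∀ i, t0 + 1 < i → i ≤ T → δtgt i = D - ε := by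
    intro i h1 h2
    obtain ⟨j, rfl⟩ := Nat.exists_eq_succ_of_ne_zero (show i ≠ 0 by omega)
    rw [hδ j (by omega)]
    exact min_eq_left (hgt j (by omega) (by omega)).le
  have hDmaxDε : 0 < Dmax - D + ε := by linarith
  -- the residual queue bound
  have hB : Q T ≤ (τm : ℝ) * (Dmax - D + ε) + (D - ε) := by
    rcases eq_or_lt_of_le ht0T with heq | hlt
    · rw [← heq]
      have hnn : (0:ℝ) ≤ (τm : ℝ) * (Dmax - D + ε) := by positivity
      linarith
    · -- excursion length bound : T ≤ t0 + τm
      have hlen : T ≤ t0 + τm := by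
        by_contra hcon
        push_neg at hcon
        set t1 := t0 + τm + 1 with ht1def
        have ht1T : t1 ≤ T := by omega
        have hQt1 := hQdiff t0 t1 (by omega)
        rw [Finset.sum_sub_distrib] at hQt1
        -- bound the channel sum
        have hEsum : ∑ i ∈ Finset.Ioc t0 t1, δch i ≤ Dmax * ∑ i ∈ Finset.Ioc t0 t1, E i := by
          rw [Finset.mul_sum]
          refine Finset.sum_le_sum fun i hi => ?_
          have := (Finset.mem_Ioc.mp hi).1
          exact hch_le i (by omega)
        have henv' : ∑ i ∈ Finset.Ioc t0 t1, E i < A * τm + ψ τm := by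
          have := henv (t0+1) (by omega) τm hτm1
          rwa [show t0 + 1 + τm = t1 by omega, Finset.Icc_add_one_left_eq_Ioc] at this
        have hchsum : ∑ i ∈ Finset.Ioc t0 t1, δch i < (D - ε) * τm := by
          calc ∑ i ∈ Finset.Ioc t0 t1, δch i ≤ Dmax * ∑ i ∈ Finset.Ioc t0 t1, E i := hEsum
            _ < Dmax * (A * τm + ψ τm) := by
                exact mul_lt_mul_of_pos_left henv' hDmax
            _ ≤ (D - ε) * τm := hψτ
        -- bound the target sum from below
        have hsplit : (∑ i ∈ Finset.Ioc t0 (t0+1), δtgt i) + ∑ i ∈ Finset.Ioc (t0+1) t1, δtgt i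
            = ∑ i ∈ Finset.Ioc t0 t1, δtgt i :=
          Finset.sum_Ioc_consecutive _ (Nat.le_succ t0) (by omega)
        have hfirst : ∑ i ∈ Finset.Ioc t0 (t0+1), δtgt i = δtgt (t0+1) := by
          rw [show Finset.Ioc t0 (t0+1) = {t0+1} by
            rw [← Finset.Icc_add_one_left_eq_Ioc]; exact Finset.Icc_self (t0+1), Finset.sum_singleton]
        have hrest : ∑ i ∈ Finset.Ioc (t0+1) t1, δtgt i = (τm : ℝ) * (D - ε) := by
          rw [Finset.sum_congr rfl fun i hi => by
            have := Finset.mem_Ioc.mp hi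
            exact hδtgt_eq i this.1 (by omega)]
          rw [Finset.sum_const, Nat.card_Ioc]
          rw [show t1 - (t0 + 1) = τm by omega]
          simp [nsmul_eq_mul]
        have htgtsum : (τm : ℝ) * (D - ε) ≤ ∑ i ∈ Finset.Ioc t0 t1, δtgt i := by
          have h0 := (hδtgt_bounds (t0+1) (by omega)).1
          rw [← hsplit, hfirst, hrest]; linarith
        have : Q t1 < D - ε := by
          rw [hQt1]
          linarith
        exact absurd this (not_lt.mpr (hgt t1 (by omega) ht1T).le)
      -- now bound Q T
      have hQt01 : Q (t0 + 1) ≤ Dmax := by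
        rw [hQstep t0]
        have hδt01 : δtgt (t0 + 1) = Q t0 := by
          rcases Nat.eq_zero_or_pos t0 with h0 | ht0p
          · rw [h0, hδ1, hQ0]
          · rw [hδ t0 ht0p]
            exact min_eq_right hPt0
        rw [hδt01]
        have := hch_leD (t0+1)
        linarith
      have hQT := hQdiff (t0+1) T hlt
      have hbound : ∑ i ∈ Finset.Ioc (t0+1) T, (δch i - δtgt i)
          ≤ (↑(T - (t0+1)) : ℝ) * (Dmax - D + ε) := by
        calc ∑ i ∈ Finset.Ioc (t0+1) T, (δch i - δtgt i)
            ≤ ∑ _i ∈ Finset.Ioc (t0+1) T, (Dmax - (D - ε)) := by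
              refine Finset.sum_le_sum fun i hi => ?_
              have hi' := Finset.mem_Ioc.mp hi
              rw [hδtgt_eq i hi'.1 hi'.2]
              linarith [hch_leD i]
          _ = (↑(T - (t0+1)) : ℝ) * (Dmax - D + ε) := by
              rw [Finset.sum_const, Nat.card_Ioc, nsmul_eq_mul]
              ring
      have hcard : (↑(T - (t0+1)) : ℝ) ≤ (τm : ℝ) - 1 := by
        have h1 : T - (t0+1) ≤ τm - 1 := by omega
        have h2 : ((τm - 1 : ℕ) : ℝ) = (τm : ℝ) - 1 := by
          rw [Nat.cast_sub hτm1]; simp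
        calc (↑(T - (t0+1)) : ℝ) ≤ ((τm - 1 : ℕ) : ℝ) := by exact_mod_cast h1
          _ = (τm : ℝ) - 1 := h2
      rw [hQT]
      have : (↑(T - (t0+1)) : ℝ) * (Dmax - D + ε) ≤ ((τm : ℝ) - 1) * (Dmax - D + ε) :=
        mul_le_mul_of_nonneg_right hcard hDmaxDε.le
      nlinarith [hbound]
  -- assemble the sums
  set S1 := ∑ t ∈ Finset.Icc 1 T, d (X t) (Xhat t) with hS1
  set S2 := ∑ t ∈ Finset.Icc 1 T, d (X t) (Xtil t) with hS2
  set S3 := ∑ t ∈ Finset.Icc 1 T, δtgt t with hS3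
  have e1 : Q T = S1 - S2 - S3 := by
    rw [hQ T, hS1, hS2, hS3]
    rw [Finset.sum_sub_distrib, Finset.sum_sub_distrib]
  have e2 : η * (S2 - T * D + S3) = lam (T+1) - lam₀ := by
    have h := htel T
    rw [hinit] at h
    have hsum : ∑ t ∈ Finset.Icc 1 T, (d (X t) (Xtil t) - D + δtgt t) = S2 - T * D + S3 := by
      rw [Finset.sum_add_distrib, Finset.sum_sub_distrib, Finset.sum_const, Nat.card_Icc,
        ← hS2, ← hS3, nsmul_eq_mul]
      norm_num
    rw [hsum] at h
    exact h
  have hlamT := hlam_ub (T+1) (by omega)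
  -- S1 ≤ T*D + K/η + B
  have hS1le : S1 ≤ T * D + (L / ε + η * (Dmax - ε) - lam₀) / η
      + ((τm : ℝ) * (Dmax - D + ε) + (D - ε)) := by
    have h1 : S2 - T * D + S3 = (lam (T+1) - lam₀) / η := by
      rw [← e2]; field_simp
    have h2 : S1 = T * D + (lam (T+1) - lam₀) / η + Q T := by
      have : S1 = (S2 - T*D + S3) + T * D + Q T := by rw [e1]; ring
      rw [this, h1]; ring
    have h3 : (lam (T+1) - lam₀) / η ≤ (L / ε + η * (Dmax - ε) - lam₀) / η := by
      gcongr
    linarith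
  -- final algebra
  have hgoal : D + (L / ε + η * (Dmax - ε) - lam₀) / ((T : ℝ) * η)
      + ((τm : ℝ) * (Dmax - D + ε) + D - ε) / T
      = (1 / (T : ℝ)) * (T * D + (L / ε + η * (Dmax - ε) - lam₀) / η
        + ((τm : ℝ) * (Dmax - D + ε) + (D - ε))) := by
    field_simp
    ring
  rw [hgoal]
  exact mul_le_mul_of_nonneg_left hS1le (by positivity)
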